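/- Let n ≥ 1 and let g_1,…,g_n be real constants. Define Q : ℝ^n × ℝ^{n−1} → ℝ by Q(z,x) = exp( g_1 e^{z_1} + Σ_{i=1}^{n−1} ( e^{x_i − z_i} + g_{i+1} e^{z_{i+1} − x_i} ) ). Then for all z ∈ ℝ^n, x ∈ ℝ^{n−1}: −(1/2) Σ_{i=1}^{n} ∂²Q/∂z_i² + [ (g_1/2)( e^{z_1} + g_1 e^{2 z_1} ) + Σ_{i=1}^{n−1} g_{i+1} e^{z_{i+1} − z_i} ] Q = −(1/2) Σ_{i=1}^{n−1} ∂²Q/∂x_i² + [ g_1 e^{x_1} + Σ_{i=1}^{n−2} g_{i+1} e^{x_{i+1} − x_i} ] Q. That is, Q intertwines the quadratic Hamiltonians of the BC_n and B_{n−1} open Toda chains. -/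

import Mathlib

open Real

/-- Second partial derivative of `f` in the `i`-th coordinate at `x`. -/
noncomputable def pd2 {k : ℕ} (f : (Fin k → ℝ) → ℝ) (i : Fin k) (x : Fin k → ℝ) : ℝ :=
  deriv (deriv (fun t : ℝ => f (Function.update x i t))) (x i)

/-- The elementary kernel intertwining the `BC_n` and `B_{n−1}` open Toda
chains (`n = m + 1 ≥ 1`):
`Q(z,x) = exp( g_1 e^{z_1} + Σ_{i=1}^{n−1} ( e^{x_i − z_i} + g_{i+1} e^{z_{i+1} − x_i} ) )`. -/
noncomputable def Qker (m : ℕ) (g : Fin (m + 1) → ℝ)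
    (z : Fin (m + 1) → ℝ) (x : Fin m → ℝ) : ℝ :=
  Real.exp (g 0 * Real.exp (z 0) + ∑ i : Fin m,
    (Real.exp (x i - z i.castSucc) + g i.succ * Real.exp (z i.succ - x i)))

/- ### Auxiliary calculus lemma -/

lemma expAB_hasDeriv (a b C : ℝ) (t : ℝ) :
    HasDerivAt (fun t => Real.exp (C + a * Real.exp t + b * Real.exp (-t)))
      (Real.exp (C + a * Real.exp t + b * Real.exp (-t)) * (a * Real.exp t - b * Real.exp (-t))) t := by
  have hb : HasDerivAt (fun t : ℝ => Real.exp (-t)) (-Real.exp (-t)) t := by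
    exact ((Real.hasDerivAt_exp (-t)).comp t (hasDerivAt_neg t)).congr_deriv (by ring)
  have h1 : HasDerivAt (fun t => C + a * Real.exp t + b * Real.exp (-t))
      (a * Real.exp t - b * Real.exp (-t)) t := by
    have := ((hasDerivAt_const t C).add ((Real.hasDerivAt_exp t).const_mul a)).add
      (hb.const_mul b)
    refine this.congr_deriv ?_
    ring
  simpa [mul_comm] using h1.exp

lemma second_deriv_expAB (a b C s : ℝ) :
    deriv (deriv (fun t => Real.exp (C + a * Real.exp t + b * Real.exp (-t)))) s
    = Real.exp (C + a * Real.exp s + b * Real.exp (-s)) *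
      ((a * Real.exp s - b * Real.exp (-s)) ^ 2 + (a * Real.exp s + b * Real.exp (-s))) := by
  have hd : deriv (fun t => Real.exp (C + a * Real.exp t + b * Real.exp (-t)))
      = fun t => Real.exp (C + a * Real.exp t + b * Real.exp (-t))
          * (a * Real.exp t - b * Real.exp (-t)) :=
    funext fun t => (expAB_hasDeriv a b C t).deriv
  rw [hd]
  have hb : HasDerivAt (fun t : ℝ => Real.exp (-t)) (-Real.exp (-s)) s := by
    exact ((Real.hasDerivAt_exp (-s)).comp s (hasDerivAt_neg s)).congr_deriv (by ring)
  have h2 : HasDerivAt (fun t => a * Real.exp t - b * Real.exp (-t))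
      (a * Real.exp s + b * Real.exp (-s)) s := by
    have := ((Real.hasDerivAt_exp s).const_mul a).sub (hb.const_mul b)
    refine this.congr_deriv ?_; ring
  rw [(((expAB_hasDeriv a b C s).mul h2 : HasDerivAt (fun t => _ * _) _ s)).deriv]; ring

/- ### Coefficients of the kernel exponent in a single `z`-coordinate -/

noncomputable def Acoef (m : ℕ) (g : Fin (m + 1) → ℝ) (x : Fin m → ℝ) : Fin (m + 1) → ℝ :=
  Fin.cases (g 0) (fun i => g i.succ * Real.exp (-(x i)))

noncomputable def Bcoef (m : ℕ) (x : Fin m → ℝ) : Fin (m + 1) → ℝ :=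
  Fin.lastCases 0 (fun i => Real.exp (x i))

noncomputable def Cz (m : ℕ) (g : Fin (m + 1) → ℝ) (z : Fin (m + 1) → ℝ) (x : Fin m → ℝ)
    (j : Fin (m + 1)) : ℝ :=
  (if (0 : Fin (m + 1)) = j then 0 else g 0 * Real.exp (z 0)) +
  ∑ i : Fin m, ((if i.castSucc = j then 0 else Real.exp (x i - z i.castSucc))
    + (if i.succ = j then 0 else g i.succ * Real.exp (z i.succ - x i)))

lemma Asum (m : ℕ) (g : Fin (m + 1) → ℝ) (x : Fin m → ℝ) (j : Fin (m + 1)) :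
    (if (0 : Fin (m + 1)) = j then g 0 else 0)
      + ∑ i : Fin m, (if i.succ = j then g i.succ * Real.exp (-(x i)) else 0)
    = Acoef m g x j := by
  induction j using Fin.cases with
  | zero => simp [Acoef, Fin.succ_ne_zero]
  | succ i0 =>
    simp [Acoef, (Fin.succ_ne_zero i0).symm, Fin.succ_inj, Finset.sum_ite_eq']

lemma Bsum (m : ℕ) (x : Fin m → ℝ) (j : Fin (m + 1)) :
    ∑ i : Fin m, (if i.castSucc = j then Real.exp (x i) else 0) = Bcoef m x j := by
  induction j using Fin.lastCases with
  | last => simp [Bcoef, fun i : Fin m => (Fin.castSucc_lt_last i).ne]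
  | cast i0 =>
    simp [Bcoef, Fin.castSucc_inj, Finset.sum_ite_eq']

lemma decompZ (m : ℕ) (g : Fin (m + 1) → ℝ) (z : Fin (m + 1) → ℝ) (x : Fin m → ℝ)
    (j : Fin (m + 1)) (t : ℝ) :
    g 0 * Real.exp (Function.update z j t 0) + ∑ i : Fin m,
      (Real.exp (x i - Function.update z j t i.castSucc)
        + g i.succ * Real.exp (Function.update z j t i.succ - x i))
    = Cz m g z x j + Acoef m g x j * Real.exp t + Bcoef m x j * Real.exp (-t) := by
  rw [← Asum, ← Bsum, Cz]
  simp only [Function.update_apply]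
  rw [show (∑ i : Fin m, (Real.exp (x i - if i.castSucc = j then t else z i.castSucc)
      + g i.succ * Real.exp ((if i.succ = j then t else z i.succ) - x i)))
    = ∑ i : Fin m, (((if i.castSucc = j then 0 else Real.exp (x i - z i.castSucc))
        + (if i.succ = j then 0 else g i.succ * Real.exp (z i.succ - x i)))
      + ((if i.succ = j then g i.succ * Real.exp (-(x i)) else 0) * Real.exp t
      + (if i.castSucc = j then Real.exp (x i) else 0) * Real.exp (-t))) from
    Finset.sum_congr rfl fun i _ => by
      split_ifs <;> simp [sub_eq_add_neg, Real.exp_add] <;> ring,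
    Finset.sum_add_distrib, Finset.sum_add_distrib, Finset.sum_add_distrib,
    add_mul, Finset.sum_mul, Finset.sum_mul]
  split_ifs <;> ring

/- ### Coefficients in a single `x`-coordinate -/

noncomputable def Cx (m : ℕ) (g : Fin (m + 1) → ℝ) (z : Fin (m + 1) → ℝ) (x : Fin m → ℝ)
    (i : Fin m) : ℝ :=
  g 0 * Real.exp (z 0) +
  ∑ i' : Fin m, ((if i' = i then 0 else Real.exp (x i' - z i'.castSucc))
    + (if i' = i then 0 else g i'.succ * Real.exp (z i'.succ - x i')))

lemma decompX (m : ℕ) (g : Fin (m + 1) → ℝ) (z : Fin (m + 1) → ℝ) (x : Fin m → ℝ)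
    (i : Fin m) (t : ℝ) :
    g 0 * Real.exp (z 0) + ∑ i' : Fin m,
      (Real.exp (Function.update x i t i' - z i'.castSucc)
        + g i'.succ * Real.exp (z i'.succ - Function.update x i t i'))
    = Cx m g z x i + Real.exp (-(z i.castSucc)) * Real.exp t
        + (g i.succ * Real.exp (z i.succ)) * Real.exp (-t) := by
  have h1 : Real.exp (-(z i.castSucc)) = ∑ i' : Fin m,
      (if i' = i then Real.exp (-(z i'.castSucc)) else 0) := by
    rw [Finset.sum_ite_eq']; simp
  have h2 : g i.succ * Real.exp (z i.succ) = ∑ i' : Fin m,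
      (if i' = i then g i'.succ * Real.exp (z i'.succ) else 0) := by
    rw [Finset.sum_ite_eq']; simp
  rw [Cx, h1, h2]
  simp only [Function.update_apply]
  rw [show (∑ i' : Fin m, (Real.exp ((if i' = i then t else x i') - z i'.castSucc)
      + g i'.succ * Real.exp (z i'.succ - if i' = i then t else x i')))
    = ∑ i' : Fin m, (((if i' = i then 0 else Real.exp (x i' - z i'.castSucc))
        + (if i' = i then 0 else g i'.succ * Real.exp (z i'.succ - x i')))
      + ((if i' = i then Real.exp (-(z i'.castSucc)) else 0) * Real.exp t
      + (if i' = i then g i'.succ * Real.exp (z i'.succ) else 0) * Real.exp (-t))) from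
    Finset.sum_congr rfl fun i' _ => by
      split_ifs <;> simp [sub_eq_add_neg, Real.exp_add] <;> ring,
    Finset.sum_add_distrib, Finset.sum_add_distrib, Finset.sum_add_distrib,
    Finset.sum_mul, Finset.sum_mul]
  ring

/- ### The two elementary exponential factors -/

noncomputable def Uu (m : ℕ) (z : Fin (m + 1) → ℝ) (x : Fin m → ℝ) (i : Fin m) : ℝ :=
  Real.exp (x i) * Real.exp (-(z i.castSucc))

noncomputable def Vv (m : ℕ) (g : Fin (m + 1) → ℝ) (z : Fin (m + 1) → ℝ) (x : Fin m → ℝ)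
    (i : Fin m) : ℝ :=
  g i.succ * (Real.exp (-(x i)) * Real.exp (z i.succ))

/- ### Second partial derivatives of the kernel -/

lemma pd2Z (m : ℕ) (g : Fin (m + 1) → ℝ) (z : Fin (m + 1) → ℝ) (x : Fin m → ℝ)
    (j : Fin (m + 1)) :
    pd2 (fun u => Qker m g u x) j z
      = Qker m g z x *
        ((Acoef m g x j * Real.exp (z j) - Bcoef m x j * Real.exp (-(z j))) ^ 2
          + (Acoef m g x j * Real.exp (z j) + Bcoef m x j * Real.exp (-(z j)))) := by
  have hfun : (fun t : ℝ => Real.exp (g 0 * Real.exp (Function.update z j t 0)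
        + ∑ i : Fin m, (Real.exp (x i - Function.update z j t i.castSucc)
          + g i.succ * Real.exp (Function.update z j t i.succ - x i))))
      = fun t => Real.exp (Cz m g z x j + Acoef m g x j * Real.exp t
          + Bcoef m x j * Real.exp (-t)) :=
    funext fun t => by rw [decompZ]
  have harg := decompZ m g z x j (z j)
  rw [Function.update_eq_self] at harg
  simp only [pd2, Qker]
  rw [hfun, second_deriv_expAB, harg]

lemma pd2X (m : ℕ) (g : Fin (m + 1) → ℝ) (z : Fin (m + 1) → ℝ) (x : Fin m → ℝ)
    (i : Fin m) :
    pd2 (fun v => Qker m g z v) i x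
      = Qker m g z x * ((Uu m z x i - Vv m g z x i) ^ 2 + (Uu m z x i + Vv m g z x i)) := by
  have hfun : (fun t : ℝ => Real.exp (g 0 * Real.exp (z 0)
        + ∑ i' : Fin m, (Real.exp (Function.update x i t i' - z i'.castSucc)
          + g i'.succ * Real.exp (z i'.succ - Function.update x i t i'))))
      = fun t => Real.exp (Cx m g z x i + Real.exp (-(z i.castSucc)) * Real.exp t
          + (g i.succ * Real.exp (z i.succ)) * Real.exp (-t)) :=
    funext fun t => by rw [decompX]
  have harg := decompX m g z x i (x i)
  rw [Function.update_eq_self] at harg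
  simp only [pd2, Qker]
  rw [hfun, second_deriv_expAB, harg, Uu, Vv]
  ring

/- ### Summation helpers -/

lemma split_sum {k : ℕ} (φ ψ : Fin k → ℝ) :
    ∑ j : Fin k, ((φ j - ψ j) ^ 2 + (φ j + ψ j))
    = ∑ j : Fin k, φ j ^ 2 + ∑ j : Fin k, ψ j ^ 2 - 2 * ∑ j : Fin k, (φ j * ψ j)
      + ∑ j : Fin k, φ j + ∑ j : Fin k, ψ j := by
  rw [Finset.mul_sum, ← Finset.sum_add_distrib, ← Finset.sum_sub_distrib,
    ← Finset.sum_add_distrib, ← Finset.sum_add_distrib]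
  exact Finset.sum_congr rfl fun j _ => by ring

lemma sumA1 (m : ℕ) (g : Fin (m + 1) → ℝ) (z : Fin (m + 1) → ℝ) (x : Fin m → ℝ) :
    ∑ j : Fin (m + 1), Acoef m g x j * Real.exp (z j)
    = g 0 * Real.exp (z 0) + ∑ i : Fin m, Vv m g z x i := by
  rw [Fin.sum_univ_succ]
  simp [Acoef, Vv, mul_assoc]

lemma sumA2 (m : ℕ) (g : Fin (m + 1) → ℝ) (z : Fin (m + 1) → ℝ) (x : Fin m → ℝ) :
    ∑ j : Fin (m + 1), (Acoef m g x j * Real.exp (z j)) ^ 2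
    = (g 0 * Real.exp (z 0)) ^ 2 + ∑ i : Fin m, Vv m g z x i ^ 2 := by
  rw [Fin.sum_univ_succ, show ∑ i : Fin m, (Acoef m g x i.succ * Real.exp (z i.succ)) ^ 2
      = ∑ i : Fin m, Vv m g z x i ^ 2 from Finset.sum_congr rfl fun i _ => by
    simp only [Acoef, Fin.cases_succ, Vv]
    ring]
  simp [Acoef]

lemma sumB1 (m : ℕ) (z : Fin (m + 1) → ℝ) (x : Fin m → ℝ) :
    ∑ j : Fin (m + 1), Bcoef m x j * Real.exp (-(z j))
    = ∑ i : Fin m, Uu m z x i := by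
  rw [Fin.sum_univ_castSucc]
  simp [Bcoef, Uu]

lemma sumB2 (m : ℕ) (z : Fin (m + 1) → ℝ) (x : Fin m → ℝ) :
    ∑ j : Fin (m + 1), (Bcoef m x j * Real.exp (-(z j))) ^ 2
    = ∑ i : Fin m, Uu m z x i ^ 2 := by
  rw [Fin.sum_univ_castSucc]
  simp [Bcoef, Uu]

lemma crossAB (m : ℕ) (g : Fin (m + 1) → ℝ) (z : Fin (m + 1) → ℝ) (x : Fin m → ℝ)
    (j : Fin (m + 1)) :
    (Acoef m g x j * Real.exp (z j)) * (Bcoef m x j * Real.exp (-(z j)))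
    = Acoef m g x j * Bcoef m x j := by
  have : Real.exp (z j) * Real.exp (-(z j)) = 1 := by
    rw [← Real.exp_add]; simp
  calc (Acoef m g x j * Real.exp (z j)) * (Bcoef m x j * Real.exp (-(z j)))
      = Acoef m g x j * Bcoef m x j * (Real.exp (z j) * Real.exp (-(z j))) := by ring
    _ = Acoef m g x j * Bcoef m x j := by rw [this, mul_one]

lemma cross0 (m : ℕ) (g : Fin (m + 1) → ℝ) (x : Fin m → ℝ) :
    Acoef m g x 0 * Bcoef m x 0
    = (if h : 0 < m then g 0 * Real.exp (x ⟨0, h⟩) else 0) := by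
  cases m with
  | zero =>
    rw [dif_neg (by omega)]
    have hB : Bcoef 0 x 0 = 0 := by
      rw [show (0 : Fin 1) = Fin.last 0 from rfl, Bcoef, Fin.lastCases_last]
    rw [hB, mul_zero]
  | succ m' =>
    rw [dif_pos (Nat.succ_pos m')]
    have hB : Bcoef (m' + 1) x 0 = Real.exp (x 0) := by
      rw [show (0 : Fin (m' + 2)) = Fin.castSucc (0 : Fin (m' + 1)) from rfl, Bcoef,
        Fin.lastCases_castSucc]
    have hA : Acoef (m' + 1) g x 0 = g 0 := by
      rw [show (0 : Fin (m' + 2)) = Fin.castSucc (0 : Fin (m' + 1)) from rfl]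
      rfl
    rw [hB, hA]
    norm_num

lemma crossSucc (m : ℕ) (g : Fin (m + 1) → ℝ) (x : Fin m → ℝ) (i : Fin m) :
    Acoef m g x i.succ * Bcoef m x i.succ
    = (if h : (i : ℕ) + 1 < m then
        g ⟨(i : ℕ) + 1, Nat.succ_lt_succ i.isLt⟩
          * Real.exp (x ⟨(i : ℕ) + 1, h⟩ - x i) else 0) := by
  by_cases h : (i : ℕ) + 1 < m
  · rw [dif_pos h]
    have hs : i.succ = Fin.castSucc (⟨(i : ℕ) + 1, h⟩ : Fin m) := by
      apply Fin.ext; simp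
    have hg : i.succ = (⟨(i : ℕ) + 1, Nat.succ_lt_succ i.isLt⟩ : Fin (m + 1)) := by
      apply Fin.ext; simp
    rw [hs, Bcoef, Fin.lastCases_castSucc, ← hs, Acoef, Fin.cases_succ, hg,
      sub_eq_add_neg, Real.exp_add]
    ring
  · rw [dif_neg h]
    have hs : i.succ = Fin.last m := by
      apply Fin.ext; simp; omega
    rw [hs, Bcoef, Fin.lastCases_last, mul_zero]

lemma sumCross (m : ℕ) (g : Fin (m + 1) → ℝ) (z : Fin (m + 1) → ℝ) (x : Fin m → ℝ) :
    ∑ j : Fin (m + 1), (Acoef m g x j * Real.exp (z j)) * (Bcoef m x j * Real.exp (-(z j)))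
    = (if h : 0 < m then g 0 * Real.exp (x ⟨0, h⟩) else 0)
      + ∑ i : Fin m, (if h : (i : ℕ) + 1 < m then
          g ⟨(i : ℕ) + 1, Nat.succ_lt_succ i.isLt⟩
            * Real.exp (x ⟨(i : ℕ) + 1, h⟩ - x i) else 0) := by
  simp only [crossAB]
  rw [Fin.sum_univ_succ, cross0]
  congr 1
  exact Finset.sum_congr rfl fun i _ => crossSucc m g x i

lemma sumVz (m : ℕ) (g : Fin (m + 1) → ℝ) (z : Fin (m + 1) → ℝ) (x : Fin m → ℝ) :
    ∑ i : Fin m, g i.succ * Real.exp (z i.succ - z i.castSucc)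
    = ∑ i : Fin m, Uu m z x i * Vv m g z x i := by
  refine Finset.sum_congr rfl fun i _ => ?_
  rw [Uu, Vv, sub_eq_add_neg, Real.exp_add]
  have hx : Real.exp (x i) * Real.exp (-(x i)) = 1 := by
    rw [← Real.exp_add]; simp
  calc g i.succ * (Real.exp (z i.succ) * Real.exp (-(z i.castSucc)))
      = (Real.exp (x i) * Real.exp (-(x i)))
        * (g i.succ * (Real.exp (z i.succ) * Real.exp (-(z i.castSucc)))) := by
        rw [hx, one_mul]
    _ = Real.exp (x i) * Real.exp (-(z i.castSucc))
        * (g i.succ * (Real.exp (-(x i)) * Real.exp (z i.succ))) := by ring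

theorem BC_B_intertwining (m : ℕ) (g : Fin (m + 1) → ℝ)
    (z : Fin (m + 1) → ℝ) (x : Fin m → ℝ) :
    -(1/2) * (∑ i : Fin (m + 1), pd2 (fun u => Qker m g u x) i z)
      + ((g 0 / 2) * (Real.exp (z 0) + g 0 * Real.exp (2 * z 0))
          + ∑ i : Fin m, g i.succ * Real.exp (z i.succ - z i.castSucc)) * Qker m g z x
    = -(1/2) * (∑ i : Fin m, pd2 (fun v => Qker m g z v) i x)
      + ((if h : 0 < m then g 0 * Real.exp (x ⟨0, h⟩) else 0)
          + ∑ i : Fin m, (if h : (i : ℕ) + 1 < m then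
              g ⟨(i : ℕ) + 1, Nat.succ_lt_succ i.isLt⟩
                * Real.exp (x ⟨(i : ℕ) + 1, h⟩ - x i) else 0)) * Qker m g z x := by
  simp only [pd2Z, pd2X]
  rw [← Finset.mul_sum, ← Finset.mul_sum, split_sum, split_sum,
    sumA1, sumA2, sumB1, sumB2, sumCross, sumVz m g z x,
    show (2 : ℝ) * z 0 = z 0 + z 0 from two_mul _, Real.exp_add]
  ring
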